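/- arXiv:0803.2605 — 2 statements merged into one kernel-verified Lean document; each statement's English description precedes it below -/
import Mathlib

section
/- Let R ⊆ S be commutative rings and F a bounded chain complex of finitely generated free R-modules such that F ⊗_R S is exact. Then choosing S-linear splittings of the boundary exact sequences yields an S-module isomorphism (⊕_j F_{2j}) ⊗_R S ≅ (⊕_j F_{2j+1}) ⊗_R S, and its determinant, as an element of S^×/R^×, is independent of the choice of splittings. -/
noncomputable section

variable {R : Type*} [CommRing R] (S : Type*) [CommRing S] [Algebra R S]
variable (F : ℕ → Type*) [∀ i, AddCommGroup (F i)] [∀ i, Module R (F i)]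

/-- Transport along an equality of indices. -/
def tcast {a b : ℕ} (h : a = b) :
    TensorProduct R S (F a) ≃ₗ[S] TensorProduct R S (F b) := by
  subst h; exact LinearEquiv.refl _ _

variable (d : ∀ i, F (i + 1) →ₗ[R] F i)

/-- `s` is a (family of) `S`-linear splittings of the base-changed complex `F ⊗_R S`,
expressed as a contracting homotopy: `d∘s = 1` in degree `0` and `d∘s + s∘d = 1` in
positive degrees.  Such data is precisely a choice of splittings of the exact sequences
`0 → Z_i → F_i ⊗ S → B_{i−1} → 0` (together with `B_i = Z_i`). -/
def IsSplitting (s : ∀ i, TensorProduct R S (F i) →ₗ[S] TensorProduct R S (F (i + 1))) :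
    Prop :=
  (LinearMap.baseChange S (d 0)) ∘ₗ s 0 = LinearMap.id ∧
  ∀ i, (LinearMap.baseChange S (d (i + 1))) ∘ₗ s (i + 1)
        + s i ∘ₗ (LinearMap.baseChange S (d i)) = LinearMap.id

/-- The map `⊕_j F_{2j} ⊗ S → ⊕_j F_{2j+1} ⊗ S` assembled from the differentials and
the chosen splittings `s`: in the `j`-th coordinate it is `s_{2j} + d_{2j+1}`. -/
def assembledMap (m : ℕ)
    (s : ∀ i, TensorProduct R S (F i) →ₗ[S] TensorProduct R S (F (i + 1))) :
    (∀ j : Fin m, TensorProduct R S (F (2 * (j : ℕ))))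
      →ₗ[S] ∀ j : Fin m, TensorProduct R S (F (2 * (j : ℕ) + 1)) :=
  LinearMap.pi fun j =>
    s (2 * (j : ℕ)) ∘ₗ LinearMap.proj j
      + (if h : (j : ℕ) + 1 < m then
          (LinearMap.baseChange S (d (2 * (j : ℕ) + 1))) ∘ₗ
            (tcast S F (by omega : 2 * ((j : ℕ) + 1)
                = 2 * (j : ℕ) + 1 + 1)).toLinearMap ∘ₗ
            LinearMap.proj (⟨(j : ℕ) + 1, h⟩ : Fin m)
        else 0)

-- ===================== auxiliary development =====================

variable (R) in
/-- Abbreviation for the base-changed modules. -/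
abbrev MM (i : ℕ) := TensorProduct R S (F i)

/-- Abbreviation for the base-changed differentials. -/
abbrev bcd (i : ℕ) : MM R S F (i + 1) →ₗ[S] MM R S F i := LinearMap.baseChange S (d i)

lemma bcd_bcd (hdd : ∀ i, d i ∘ₗ d (i + 1) = 0) (i : ℕ) :
    bcd S F d i ∘ₗ bcd S F d (i + 1) = 0 := by
  rw [bcd, bcd, ← LinearMap.baseChange_comp, hdd i, LinearMap.baseChange_zero]

lemma subsingleton_MM {i : ℕ} (h : Subsingleton (F i)) :
    Subsingleton (TensorProduct R S (F i)) := by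
  refine subsingleton_of_forall_eq 0 fun x => ?_
  induction x with
  | zero => rfl
  | tmul a b => rw [Subsingleton.elim b 0, TensorProduct.tmul_zero]
  | add x y hx hy => rw [hx, hy, add_zero]

lemma assembledMap_apply (m : ℕ) (s : ∀ i, MM R S F i →ₗ[S] MM R S F (i + 1))
    (x : ∀ j : Fin m, MM R S F (2 * (j : ℕ))) (jv : ℕ) (hj : jv < m) :
    assembledMap S F d m s x ⟨jv, hj⟩
      = s (2 * jv) (x ⟨jv, hj⟩)
        + (if h : jv + 1 < m then bcd S F d (2 * jv + 1) (x ⟨jv + 1, h⟩) else 0) := by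
  simp only [assembledMap, LinearMap.pi_apply, LinearMap.add_apply, LinearMap.comp_apply,
    LinearMap.proj_apply, Fin.val_mk]
  by_cases h : jv + 1 < m
  · rw [dif_pos h, dif_pos h]; rfl
  · rw [dif_neg h, dif_neg h]; rfl

/-- The reverse assembled map `⊕ F_{2j+1}⊗S → ⊕ F_{2j}⊗S`, given by `d + s`. -/
def Bcomp (m : ℕ) (s : ∀ i, MM R S F i →ₗ[S] MM R S F (i + 1)) :
    (j : Fin m) → ((∀ j' : Fin m, MM R S F (2 * (j' : ℕ) + 1)) →ₗ[S] MM R S F (2 * (j : ℕ)))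
  | ⟨0, h⟩ => bcd S F d (2 * 0) ∘ₗ LinearMap.proj (⟨0, h⟩ : Fin m)
  | ⟨jj + 1, h⟩ =>
      bcd S F d (2 * (jj + 1)) ∘ₗ LinearMap.proj (⟨jj + 1, h⟩ : Fin m)
        + s (2 * jj + 1) ∘ₗ LinearMap.proj (⟨jj, Nat.lt_of_succ_lt h⟩ : Fin m)

def Bmap (m : ℕ) (s : ∀ i, MM R S F i →ₗ[S] MM R S F (i + 1)) :
    (∀ j' : Fin m, MM R S F (2 * (j' : ℕ) + 1)) →ₗ[S] (∀ j : Fin m, MM R S F (2 * (j : ℕ))) :=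
  LinearMap.pi (Bcomp S F d m s)

def nucomp (m : ℕ) (s : ∀ i, MM R S F i →ₗ[S] MM R S F (i + 1)) :
    (j : Fin m) → ((∀ j' : Fin m, MM R S F (2 * (j' : ℕ))) →ₗ[S] MM R S F (2 * (j : ℕ)))
  | ⟨0, _⟩ => 0
  | ⟨jj + 1, h⟩ =>
      s (2 * jj + 1) ∘ₗ s (2 * jj) ∘ₗ LinearMap.proj (⟨jj, Nat.lt_of_succ_lt h⟩ : Fin m)

def numap (m : ℕ) (s : ∀ i, MM R S F i →ₗ[S] MM R S F (i + 1)) :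
    (∀ j' : Fin m, MM R S F (2 * (j' : ℕ))) →ₗ[S] (∀ j : Fin m, MM R S F (2 * (j : ℕ))) :=
  LinearMap.pi (nucomp S F m s)

def nucomp' (m : ℕ) (s : ∀ i, MM R S F i →ₗ[S] MM R S F (i + 1)) :
    (j : Fin m) → ((∀ j' : Fin m, MM R S F (2 * (j' : ℕ) + 1)) →ₗ[S] MM R S F (2 * (j : ℕ) + 1))
  | ⟨0, _⟩ => 0
  | ⟨jj + 1, h⟩ =>
      s (2 * (jj + 1)) ∘ₗ s (2 * jj + 1) ∘ₗ LinearMap.proj (⟨jj, Nat.lt_of_succ_lt h⟩ : Fin m)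

def numap' (m : ℕ) (s : ∀ i, MM R S F i →ₗ[S] MM R S F (i + 1)) :
    (∀ j' : Fin m, MM R S F (2 * (j' : ℕ) + 1)) →ₗ[S] (∀ j : Fin m, MM R S F (2 * (j : ℕ) + 1)) :=
  LinearMap.pi (nucomp' S F m s)

section apply_lemmas

variable {m : ℕ} {s : ∀ i, MM R S F i →ₗ[S] MM R S F (i + 1)}

lemma Bmap_apply_zero (h : 0 < m) (z : ∀ j' : Fin m, MM R S F (2 * (j' : ℕ) + 1)) :
    Bmap S F d m s z ⟨0, h⟩ = bcd S F d (2 * 0) (z ⟨0, h⟩) := rfl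

lemma Bmap_apply_succ (jj : ℕ) (h : jj + 1 < m) (z : ∀ j' : Fin m, MM R S F (2 * (j' : ℕ) + 1)) :
    Bmap S F d m s z ⟨jj + 1, h⟩
      = HAdd.hAdd (β := MM R S F (2 * (jj + 1))) (bcd S F d (2 * (jj + 1)) (z ⟨jj + 1, h⟩))
          (s (2 * jj + 1) (z ⟨jj, Nat.lt_of_succ_lt h⟩)) := rfl

lemma numap_apply_zero (h : 0 < m) (z : ∀ j' : Fin m, MM R S F (2 * (j' : ℕ))) :
    numap S F m s z ⟨0, h⟩ = 0 := rfl

lemma numap_apply_succ (jj : ℕ) (h : jj + 1 < m) (z : ∀ j' : Fin m, MM R S F (2 * (j' : ℕ))) :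
    numap S F m s z ⟨jj + 1, h⟩
      = s (2 * jj + 1) (s (2 * jj) (z ⟨jj, Nat.lt_of_succ_lt h⟩)) := rfl

lemma numap'_apply_zero (h : 0 < m) (z : ∀ j' : Fin m, MM R S F (2 * (j' : ℕ) + 1)) :
    numap' S F m s z ⟨0, h⟩ = 0 := rfl

lemma numap'_apply_succ (jj : ℕ) (h : jj + 1 < m)
    (z : ∀ j' : Fin m, MM R S F (2 * (j' : ℕ) + 1)) :
    numap' S F m s z ⟨jj + 1, h⟩
      = s (2 * (jj + 1)) (s (2 * jj + 1) (z ⟨jj, Nat.lt_of_succ_lt h⟩)) := rfl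

end apply_lemmas

lemma Bmap_comp_A (m : ℕ) (s : ∀ i, MM R S F i →ₗ[S] MM R S F (i + 1))
    (hdd : ∀ i, d i ∘ₗ d (i + 1) = 0) (hs : IsSplitting S F d s) :
    Bmap S F d m s ∘ₗ assembledMap S F d m s = LinearMap.id + numap S F m s := by
  apply LinearMap.ext; intro x
  funext j
  obtain ⟨jv, hj⟩ := j
  simp only [LinearMap.comp_apply, LinearMap.add_apply, LinearMap.id_apply, Pi.add_apply]
  match jv, hj with
  | 0, hj =>
    rw [Bmap_apply_zero, numap_apply_zero, assembledMap_apply, map_add]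
    have e1' : bcd S F d (2 * 0) (s (2 * 0) (x ⟨0, hj⟩)) = x ⟨0, hj⟩ :=
      LinearMap.congr_fun hs.1 (x ⟨0, hj⟩)
    rw [e1']
    by_cases h : 0 + 1 < m
    · rw [dif_pos h]
      have e2' : bcd S F d (2 * 0) (bcd S F d (2 * 0 + 1) (x ⟨0 + 1, h⟩)) = 0 :=
        LinearMap.congr_fun (bcd_bcd S F d hdd 0) (x ⟨0 + 1, h⟩)
      rw [e2']
    · rw [dif_neg h, map_zero]
  | jj + 1, hj =>
    rw [Bmap_apply_succ, numap_apply_succ, assembledMap_apply, assembledMap_apply, map_add,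
      dif_pos hj, map_add]
    have e1' : HAdd.hAdd (β := MM R S F (2 * (jj + 1)))
          (bcd S F d (2 * (jj + 1)) (s (2 * (jj + 1)) (x ⟨jj + 1, hj⟩)))
          (s (2 * jj + 1) (bcd S F d (2 * jj + 1) (x ⟨jj + 1, hj⟩)))
        = x ⟨jj + 1, hj⟩ := by
      have e1 := LinearMap.congr_fun (hs.2 (2 * jj + 1)) (x ⟨jj + 1, hj⟩)
      rw [LinearMap.add_apply, LinearMap.comp_apply, LinearMap.comp_apply,
        LinearMap.id_apply] at e1
      exact e1
    by_cases h : jj + 1 + 1 < m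
    · rw [dif_pos h]
      have e2' : bcd S F d (2 * (jj + 1)) (bcd S F d (2 * (jj + 1) + 1) (x ⟨jj + 1 + 1, h⟩))
          = 0 :=
        LinearMap.congr_fun (bcd_bcd S F d hdd (2 * (jj + 1))) (x ⟨jj + 1 + 1, h⟩)
      rw [e2']
      conv_rhs => rw [← e1']
      abel
    · rw [dif_neg h, map_zero]
      conv_rhs => rw [← e1']
      abel

lemma A_comp_Bmap (m : ℕ) (s : ∀ i, MM R S F i →ₗ[S] MM R S F (i + 1))
    (hdd : ∀ i, d i ∘ₗ d (i + 1) = 0) (hs : IsSplitting S F d s)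
    (hst : Subsingleton (MM R S F (2 * m))) :
    assembledMap S F d m s ∘ₗ Bmap S F d m s = LinearMap.id + numap' S F m s := by
  apply LinearMap.ext; intro y
  funext j
  obtain ⟨jv, hj⟩ := j
  simp only [LinearMap.comp_apply, LinearMap.add_apply, LinearMap.id_apply, Pi.add_apply]
  match jv, hj with
  | 0, hj =>
    rw [numap'_apply_zero, assembledMap_apply, Bmap_apply_zero]
    have e := LinearMap.congr_fun (hs.2 (2 * 0)) (y ⟨0, hj⟩)
    rw [LinearMap.add_apply, LinearMap.comp_apply, LinearMap.comp_apply,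
      LinearMap.id_apply] at e
    by_cases h : 0 + 1 < m
    · rw [dif_pos h, Bmap_apply_succ, map_add]
      have ez : bcd S F d (2 * 0 + 1) (bcd S F d (2 * (0 + 1)) (y ⟨0 + 1, h⟩)) = 0 :=
        LinearMap.congr_fun (bcd_bcd S F d hdd (2 * 0 + 1)) (y ⟨0 + 1, h⟩)
      rw [ez]
      conv_rhs => rw [← e]
      abel
    · have hm : m = 0 + 1 := by omega
      subst hm
      haveI : Subsingleton (MM R S F (2 * 0 + 1 + 1)) := hst
      have hs0 : s (2 * 0 + 1) = 0 := LinearMap.ext fun v => Subsingleton.elim _ _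
      rw [hs0] at e
      simp only [LinearMap.zero_apply, map_zero, zero_add] at e
      rw [dif_neg h, e]
  | jj + 1, hj =>
    rw [numap'_apply_succ, assembledMap_apply, Bmap_apply_succ, map_add]
    have e := LinearMap.congr_fun (hs.2 (2 * (jj + 1))) (y ⟨jj + 1, hj⟩)
    rw [LinearMap.add_apply, LinearMap.comp_apply, LinearMap.comp_apply,
      LinearMap.id_apply] at e
    by_cases h : jj + 1 + 1 < m
    · rw [dif_pos h, Bmap_apply_succ, map_add]
      have ez : bcd S F d (2 * (jj + 1) + 1) (bcd S F d (2 * (jj + 1 + 1)) (y ⟨jj + 1 + 1, h⟩))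
          = 0 :=
        LinearMap.congr_fun (bcd_bcd S F d hdd (2 * (jj + 1) + 1)) (y ⟨jj + 1 + 1, h⟩)
      rw [ez]
      conv_rhs => rw [← e]
      abel
    · have hm : m = jj + 1 + 1 := by omega
      subst hm
      haveI : Subsingleton (MM R S F (2 * (jj + 1) + 1 + 1)) := hst
      have hs0 : s (2 * (jj + 1) + 1) = 0 := LinearMap.ext fun v => Subsingleton.elim _ _
      rw [hs0] at e
      simp only [LinearMap.zero_apply, map_zero, zero_add] at e
      rw [dif_neg h]
      conv_rhs => rw [← e]
      abel

lemma pi_pow_eq_zero {m : ℕ} {φ : Fin m → Type*} [∀ j, AddCommGroup (φ j)]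
    [∀ j, Module S (φ j)] (ν : (∀ j, φ j) →ₗ[S] ∀ j, φ j)
    (hν : ∀ (j : Fin m) (z : ∀ j, φ j),
      (∀ j' : Fin m, (j' : ℕ) < (j : ℕ) → z j' = 0) → ν z j = 0) :
    (ν ^ m : Module.End S (∀ j, φ j)) = 0 := by
  have key : ∀ (k : ℕ) (j : Fin m), (j : ℕ) < k → ∀ z, (ν ^ k : Module.End S _) z j = 0 := by
    intro k
    induction k with
    | zero => exact fun j h => absurd h (Nat.not_lt_zero _)
    | succ k ih =>
      intro j hj z
      rw [pow_succ']
      rw [Module.End.mul_apply]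
      exact hν j _ (fun j' hj' => ih j' (by omega) z)
  apply LinearMap.ext; intro z
  funext j
  exact key m j j.isLt z

lemma numap_nilpotent (m : ℕ) (s : ∀ i, MM R S F i →ₗ[S] MM R S F (i + 1)) :
    (numap S F m s ^ m : Module.End S (∀ j : Fin m, MM R S F (2 * (j : ℕ)))) = 0 := by
  apply pi_pow_eq_zero
  intro j z hz
  obtain ⟨jv, hj⟩ := j
  match jv, hj with
  | 0, hj => rw [numap_apply_zero]
  | jj + 1, hj =>
    rw [numap_apply_succ, hz ⟨jj, Nat.lt_of_succ_lt hj⟩ (by simp), map_zero, map_zero]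

lemma numap'_nilpotent (m : ℕ) (s : ∀ i, MM R S F i →ₗ[S] MM R S F (i + 1)) :
    (numap' S F m s ^ m : Module.End S (∀ j : Fin m, MM R S F (2 * (j : ℕ) + 1))) = 0 := by
  apply pi_pow_eq_zero
  intro j z hz
  obtain ⟨jv, hj⟩ := j
  match jv, hj with
  | 0, hj => rw [numap'_apply_zero]
  | jj + 1, hj =>
    rw [numap'_apply_succ, hz ⟨jj, Nat.lt_of_succ_lt hj⟩ (by simp), map_zero, map_zero]

lemma id_add_numap_bijective (m : ℕ) (s : ∀ i, MM R S F i →ₗ[S] MM R S F (i + 1)) :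
    Function.Bijective ((LinearMap.id + numap S F m s :
      Module.End S (∀ j : Fin m, MM R S F (2 * (j : ℕ))))) := by
  rw [← Module.End.isUnit_iff]
  have h1 : (LinearMap.id + numap S F m s : Module.End S _) = 1 + numap S F m s := by
    rfl
  rw [h1]
  exact IsNilpotent.isUnit_one_add (R := Module.End S (∀ j : Fin m, MM R S F (2 * (j : ℕ))))
    ⟨m, numap_nilpotent S F m s⟩

lemma id_add_numap'_bijective (m : ℕ) (s : ∀ i, MM R S F i →ₗ[S] MM R S F (i + 1)) :
    Function.Bijective ((LinearMap.id + numap' S F m s :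
      Module.End S (∀ j : Fin m, MM R S F (2 * (j : ℕ) + 1)))) := by
  rw [← Module.End.isUnit_iff]
  have h1 : (LinearMap.id + numap' S F m s : Module.End S _) = 1 + numap' S F m s := by
    rfl
  rw [h1]
  exact IsNilpotent.isUnit_one_add (R := Module.End S (∀ j : Fin m, MM R S F (2 * (j : ℕ) + 1)))
    ⟨m, numap'_nilpotent S F m s⟩

lemma A_bijective (m : ℕ) (s : ∀ i, MM R S F i →ₗ[S] MM R S F (i + 1))
    (hdd : ∀ i, d i ∘ₗ d (i + 1) = 0) (hs : IsSplitting S F d s)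
    (hst : Subsingleton (MM R S F (2 * m))) :
    Function.Bijective (assembledMap S F d m s) := by
  constructor
  · have hBA : Function.Bijective (⇑(Bmap S F d m s) ∘ ⇑(assembledMap S F d m s)) := by
      rw [← LinearMap.coe_comp, Bmap_comp_A S F d m s hdd hs]
      exact id_add_numap_bijective S F m s
    exact Function.Injective.of_comp hBA.injective
  · have hAB : Function.Bijective (⇑(assembledMap S F d m s) ∘ ⇑(Bmap S F d m s)) := by
      rw [← LinearMap.coe_comp, A_comp_Bmap S F d m s hdd hs hst]
      exact id_add_numap'_bijective S F m s
    exact Function.Surjective.of_comp hAB.surjective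

lemma Asymm_single_diag (m : ℕ) (s : ∀ i, MM R S F i →ₗ[S] MM R S F (i + 1))
    (hdd : ∀ i, d i ∘ₗ d (i + 1) = 0) (hs : IsSplitting S F d s)
    (hbij : Function.Bijective (assembledMap S F d m s))
    (jv : ℕ) (hj : jv < m) (y : MM R S F (2 * jv + 1)) :
    (LinearEquiv.ofBijective _ hbij).symm
        (LinearMap.single S (fun j : Fin m => MM R S F (2 * (j : ℕ) + 1)) ⟨jv, hj⟩ y) ⟨jv, hj⟩
      = bcd S F d (2 * jv) y := by
  set Y := LinearMap.single S (fun j : Fin m => MM R S F (2 * (j : ℕ) + 1)) ⟨jv, hj⟩ y with hY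
  set x := (LinearEquiv.ofBijective _ hbij).symm Y with hxdef
  have hAx : assembledMap S F d m s x = Y :=
    (LinearEquiv.ofBijective _ hbij).apply_symm_apply Y
  have h1 := LinearMap.congr_fun (Bmap_comp_A S F d m s hdd hs) x
  simp only [LinearMap.comp_apply, LinearMap.add_apply, LinearMap.id_apply] at h1
  rw [hAx] at h1
  -- h1 : Bmap (Y) = x + numap x
  have hlow : ∀ (jv' : ℕ) (h' : jv' < m), jv' < jv → x ⟨jv', h'⟩ = 0 := by
    intro jv'
    induction jv' with
    | zero =>
      intro h' hlt
      have hc := congr_fun h1 ⟨0, h'⟩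
      rw [Bmap_apply_zero, Pi.add_apply, numap_apply_zero, add_zero] at hc
      rw [← hc, hY, LinearMap.single_apply,
        Pi.single_eq_of_ne (Fin.ne_of_val_ne (by simp only [Fin.val_mk]; omega)), map_zero]
    | succ jj ih =>
      intro h' hlt
      have hc := congr_fun h1 ⟨jj + 1, h'⟩
      rw [Bmap_apply_succ, Pi.add_apply, numap_apply_succ] at hc
      rw [ih (Nat.lt_of_succ_lt h') (by omega), map_zero, map_zero, add_zero] at hc
      rw [hY, LinearMap.single_apply, Pi.single_eq_of_ne (Fin.ne_of_val_ne (by simp only [Fin.val_mk]; omega)),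
        Pi.single_eq_of_ne (Fin.ne_of_val_ne (by simp only [Fin.val_mk]; omega)), map_zero, map_zero, add_zero] at hc
      exact hc.symm
  match jv, hj, y with
  | 0, hj, y =>
    have hc := congr_fun h1 ⟨0, hj⟩
    rw [Bmap_apply_zero, Pi.add_apply, numap_apply_zero, add_zero] at hc
    rw [hY, LinearMap.single_apply, Pi.single_eq_same] at hc
    exact hc.symm
  | jj + 1, hj, y =>
    have hc := congr_fun h1 ⟨jj + 1, hj⟩
    rw [Bmap_apply_succ, Pi.add_apply, numap_apply_succ] at hc
    rw [hlow jj (Nat.lt_of_succ_lt hj) (by omega), map_zero, map_zero, add_zero] at hc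
    rw [hY, LinearMap.single_apply, Pi.single_eq_same,
      Pi.single_eq_of_ne (Fin.ne_of_val_ne (by simp only [Fin.val_mk]; omega)), map_zero, add_zero] at hc
    exact hc.symm

lemma det_one_add_comm {S : Type*} [CommRing S] {V W : Type*} [AddCommGroup V] [Module S V]
    [AddCommGroup W] [Module S W] [Module.Finite S V] [Module.Free S V]
    [Module.Finite S W] [Module.Free S W] (f : V →ₗ[S] W) (g : W →ₗ[S] V) :
    LinearMap.det (LinearMap.id + g ∘ₗ f) = LinearMap.det (LinearMap.id + f ∘ₗ g) := by
  classical
  let bV := Module.Free.chooseBasis S V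
  let bW := Module.Free.chooseBasis S W
  rw [← LinearMap.det_toMatrix bV, ← LinearMap.det_toMatrix bW, map_add, map_add,
    LinearMap.toMatrix_id, LinearMap.toMatrix_id, LinearMap.toMatrix_comp bV bW bV g f,
    LinearMap.toMatrix_comp bW bV bW f g]
  exact Matrix.det_one_add_mul_comm _ _

lemma exists_splitting (n : ℕ) (hbound : ∀ i, n < i → Subsingleton (F i))
    (hdd : ∀ i, d i ∘ₗ d (i + 1) = 0)
    (hex0 : Function.Surjective (LinearMap.baseChange S (d 0)))
    (hex : ∀ i, LinearMap.range (LinearMap.baseChange S (d (i + 1)))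
            = LinearMap.ker (LinearMap.baseChange S (d i)))
    [∀ i, Module.Finite R (F i)] [∀ i, Module.Free R (F i)] :
    ∃ s, IsSplitting S F d s := by
  have key : ∀ k, ∃ σ : ∀ i, MM R S F i →ₗ[S] MM R S F (i + 1),
      (bcd S F d 0 ∘ₗ σ 0 = LinearMap.id) ∧
      ∀ i, i < k → bcd S F d (i + 1) ∘ₗ σ (i + 1) + σ i ∘ₗ bcd S F d i = LinearMap.id := by
    intro k
    induction k with
    | zero =>
      obtain ⟨s0, hs0⟩ := Module.projective_lifting_property (bcd S F d 0) LinearMap.id hex0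
      exact ⟨Function.update (fun i => (0 : MM R S F i →ₗ[S] MM R S F (i + 1))) 0 s0,
        by rwa [Function.update_self], fun i hi => absurd hi (Nat.not_lt_zero _)⟩
    | succ k ih =>
      obtain ⟨σ, hσ0, hσ⟩ := ih
      -- the map to lift in degree k+1
      have hker : ∀ v, bcd S F d k ((LinearMap.id - σ k ∘ₗ bcd S F d k :
          MM R S F (k + 1) →ₗ[S] MM R S F (k + 1)) v) = 0 := by
        intro v
        have hinv : bcd S F d k ∘ₗ σ k ∘ₗ bcd S F d k = bcd S F d k := by
          match k with
          | 0 => rw [← LinearMap.comp_assoc, hσ0, LinearMap.id_comp]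
          | k + 1 =>
            have h2 : bcd S F d (k + 1) ∘ₗ σ (k + 1)
                = LinearMap.id - σ k ∘ₗ bcd S F d k := by
              exact eq_sub_of_add_eq (G := MM R S F (k + 1) →ₗ[S] MM R S F (k + 1)) (hσ k (Nat.lt_succ_self k))
            rw [← LinearMap.comp_assoc, h2, LinearMap.sub_comp, LinearMap.id_comp,
              LinearMap.comp_assoc, bcd_bcd S F d hdd k, LinearMap.comp_zero]
            exact sub_zero (_ : MM R S F (k + 1 + 1) →ₗ[S] MM R S F (k + 1))
        calc bcd S F d k ((LinearMap.id - σ k ∘ₗ bcd S F d k :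
              MM R S F (k + 1) →ₗ[S] MM R S F (k + 1)) v)
            = bcd S F d k v - (bcd S F d k ∘ₗ σ k ∘ₗ bcd S F d k) v := by
              simp [LinearMap.sub_apply, map_sub]
          _ = 0 := by rw [hinv, sub_self]
      have hmem : ∀ v, (LinearMap.id - σ k ∘ₗ bcd S F d k :
          MM R S F (k + 1) →ₗ[S] MM R S F (k + 1)) v
          ∈ LinearMap.range (bcd S F d (k + 1)) := by
        intro v
        rw [hex k, LinearMap.mem_ker]
        exact hker v
      obtain ⟨h, hh⟩ := Module.projective_lifting_property
        ((bcd S F d (k + 1)).rangeRestrict)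
        ((LinearMap.id - σ k ∘ₗ bcd S F d k :
          MM R S F (k + 1) →ₗ[S] MM R S F (k + 1)).codRestrict _ hmem)
        (LinearMap.surjective_rangeRestrict _)
      refine ⟨Function.update σ (k + 1) h, ?_, ?_⟩
      · rwa [Function.update_of_ne (by omega)]
      · intro i hi
        rcases Nat.lt_or_ge i k with hik | hik
        · rw [Function.update_of_ne (by omega), Function.update_of_ne (by omega)]
          exact hσ i hik
        · have hik' : i = k := by omega
          subst hik'
          rw [Function.update_self, Function.update_of_ne (by omega)]
          have : bcd S F d (i + 1) ∘ₗ h = LinearMap.id - σ i ∘ₗ bcd S F d i := by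
            apply LinearMap.ext; intro v
            have := LinearMap.congr_fun hh v
            simp only [LinearMap.comp_apply, LinearMap.codRestrict_apply] at this ⊢
            calc bcd S F d (i + 1) (h v)
                = ((bcd S F d (i + 1)).rangeRestrict (h v) :
                    MM R S F (i + 1)) := rfl
              _ = (LinearMap.id - σ i ∘ₗ bcd S F d i :
                  MM R S F (i + 1) →ₗ[S] MM R S F (i + 1)) v := by rw [this]; rfl
          rw [this]
          exact sub_add_cancel (LinearMap.id : MM R S F (i + 1) →ₗ[S] MM R S F (i + 1)) _
  obtain ⟨σ, hσ0, hσ⟩ := key (n + 1)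
  refine ⟨σ, hσ0, fun i => ?_⟩
  rcases Nat.lt_or_ge i (n + 1) with hi | hi
  · exact hσ i hi
  · haveI : Subsingleton (MM R S F (i + 1)) :=
      subsingleton_MM S F (hbound (i + 1) (by omega))
    exact LinearMap.ext fun v => Subsingleton.elim _ _

lemma dt_zero (k : ℕ) (σ s' : ∀ i, MM R S F i →ₗ[S] MM R S F (i + 1))
    (hσ : IsSplitting S F d σ) (hs' : IsSplitting S F d s')
    (hag : ∀ i, i < k → σ i = s' i) :
    bcd S F d k ∘ₗ (s' k - σ k) = 0 := by
  match k with
  | 0 => rw [LinearMap.comp_sub, hσ.1, hs'.1]; exact sub_self (_ : MM R S F 0 →ₗ[S] MM R S F 0)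
  | k + 1 =>
    have h1 := hσ.2 k
    have h2 := hs'.2 k
    rw [hag k (Nat.lt_succ_self k)] at h1
    rw [LinearMap.comp_sub, eq_sub_of_add_eq (G := MM R S F (k + 1) →ₗ[S] MM R S F (k + 1)) h2,
      eq_sub_of_add_eq (G := MM R S F (k + 1) →ₗ[S] MM R S F (k + 1)) h1]
    exact sub_self (_ : MM R S F (k + 1) →ₗ[S] MM R S F (k + 1))

/-- Modify the splitting `σ` so that it agrees with `s'` also in degree `k`. -/
def moveS (σ s' : ∀ i, MM R S F i →ₗ[S] MM R S F (i + 1)) (k : ℕ) :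
    ∀ i, MM R S F i →ₗ[S] MM R S F (i + 1) :=
  Function.update (Function.update σ k (s' k)) (k + 1)
    (σ (k + 1) - σ (k + 1) ∘ₗ (s' k - σ k) ∘ₗ bcd S F d k)

lemma moveS_at_k (σ s' : ∀ i, MM R S F i →ₗ[S] MM R S F (i + 1)) (k : ℕ) :
    moveS S F d σ s' k k = s' k := by
  rw [moveS, Function.update_of_ne (by omega), Function.update_self]

lemma moveS_at_k1 (σ s' : ∀ i, MM R S F i →ₗ[S] MM R S F (i + 1)) (k : ℕ) :
    moveS S F d σ s' k (k + 1)
      = σ (k + 1) - σ (k + 1) ∘ₗ (s' k - σ k) ∘ₗ bcd S F d k := by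
  rw [moveS, Function.update_self]

lemma moveS_other (σ s' : ∀ i, MM R S F i →ₗ[S] MM R S F (i + 1)) (k i : ℕ)
    (h1 : i ≠ k) (h2 : i ≠ k + 1) : moveS S F d σ s' k i = σ i := by
  rw [moveS, Function.update_of_ne h2, Function.update_of_ne h1]

lemma moveS_splitting (σ s' : ∀ i, MM R S F i →ₗ[S] MM R S F (i + 1)) (k : ℕ)
    (hdd : ∀ i, d i ∘ₗ d (i + 1) = 0)
    (hσ : IsSplitting S F d σ) (hs' : IsSplitting S F d s')
    (hag : ∀ i, i < k → σ i = s' i) :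
    IsSplitting S F d (moveS S F d σ s' k) := by
  have hdt := dt_zero S F d k σ s' hσ hs' hag
  constructor
  · by_cases hk : k = 0
    · subst hk
      rw [moveS_at_k]
      exact hs'.1
    · rw [moveS_other S F d σ s' k 0 (by omega) (by omega)]
      exact hσ.1
  · intro i
    rcases Nat.lt_trichotomy (i + 1) k with hik | hik | hik
    · -- both i and i+1 below k : untouched
      rw [moveS_other S F d σ s' k (i + 1) (by omega) (by omega),
        moveS_other S F d σ s' k i (by omega) (by omega)]
      exact hσ.2 i
    · -- i + 1 = k
      have hik' : k = i + 1 := hik.symm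
      subst hik'
      rw [moveS_at_k, moveS_other S F d σ s' (i + 1) i (by omega) (by omega),
        hag i (Nat.lt_succ_self i)]
      exact hs'.2 i
    · rcases Nat.lt_trichotomy i k with hik2 | hik2 | hik2
      · omega
      · -- i = k
        subst hik2
        rw [moveS_at_k1, moveS_at_k]
        apply LinearMap.ext; intro v
        simp only [LinearMap.add_apply, LinearMap.comp_apply, LinearMap.sub_apply, map_sub,
          LinearMap.id_apply]
        have h1 := LinearMap.congr_fun (hσ.2 i) v
        simp only [LinearMap.add_apply, LinearMap.comp_apply, LinearMap.id_apply] at h1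
        have h2 := LinearMap.congr_fun (hσ.2 i)
          ((s' i) ((bcd S F d i) v) - (σ i) ((bcd S F d i) v))
        simp only [LinearMap.add_apply, LinearMap.comp_apply, LinearMap.id_apply] at h2
        have h3 : bcd S F d i ((s' i) ((bcd S F d i) v) - (σ i) ((bcd S F d i) v)) = 0 := by
          have := LinearMap.congr_fun hdt ((bcd S F d i) v)
          simpa [LinearMap.comp_apply, LinearMap.sub_apply] using this
        rw [h3, map_zero, add_zero] at h2
        simp only [map_sub] at h2
        rw [h2]
        conv_rhs => rw [← h1]
        abel
      · -- i > k, i ≥ k+2 : check i = k+1 case separately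
        rcases Nat.lt_trichotomy i (k + 1) with hik3 | hik3 | hik3
        · omega
        · -- i = k+1
          subst hik3
          rw [moveS_other S F d σ s' k (k + 1 + 1) (by omega) (by omega), moveS_at_k1]
          rw [LinearMap.sub_comp]
          have hz : (σ (k + 1) ∘ₗ (s' k - σ k) ∘ₗ bcd S F d k) ∘ₗ bcd S F d (k + 1) = 0 := by
            rw [LinearMap.comp_assoc, LinearMap.comp_assoc, bcd_bcd S F d hdd k,
              LinearMap.comp_zero, LinearMap.comp_zero]
          rw [hz]
          convert hσ.2 (k + 1) using 2
          exact sub_zero (_ : MM R S F (k + 1 + 1) →ₗ[S] MM R S F (k + 1 + 1))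
        · rw [moveS_other S F d σ s' k (i + 1) (by omega) (by omega),
            moveS_other S F d σ s' k i (by omega) (by omega)]
          exact hσ.2 i

lemma assembled_sub_single (m : ℕ) (σ τ : ∀ i, MM R S F i →ₗ[S] MM R S F (i + 1))
    (j₀v : ℕ) (hj₀ : j₀v < m)
    (hagree : ∀ j : Fin m, j ≠ ⟨j₀v, hj₀⟩ → τ (2 * (j : ℕ)) = σ (2 * (j : ℕ))) :
    assembledMap S F d m τ
      = assembledMap S F d m σ
        + LinearMap.single S (fun j : Fin m => MM R S F (2 * (j : ℕ) + 1)) ⟨j₀v, hj₀⟩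
            ∘ₗ (τ (2 * j₀v) - σ (2 * j₀v)) ∘ₗ LinearMap.proj (⟨j₀v, hj₀⟩ : Fin m) := by
  apply LinearMap.ext; intro x
  funext j
  simp only [LinearMap.add_apply, Pi.add_apply, LinearMap.comp_apply, LinearMap.proj_apply,
    LinearMap.single_apply]
  by_cases hje : j = ⟨j₀v, hj₀⟩
  · subst hje
    rw [Pi.single_eq_same]
    rw [assembledMap_apply, assembledMap_apply]
    simp only [LinearMap.sub_apply]
    abel
  · rw [Pi.single_eq_of_ne hje]
    obtain ⟨jv, hj⟩ := j
    rw [assembledMap_apply, assembledMap_apply, hagree ⟨jv, hj⟩ hje, add_zero]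

lemma det_move [∀ i, Module.Finite R (F i)] [∀ i, Module.Free R (F i)]
    (m : ℕ) (σ : ∀ i, MM R S F i →ₗ[S] MM R S F (i + 1))
    (hdd : ∀ i, d i ∘ₗ d (i + 1) = 0) (hσ : IsSplitting S F d σ)
    (hst : Subsingleton (MM R S F (2 * m)))
    (j₀v : ℕ) (hj₀ : j₀v < m) (c : MM R S F (2 * j₀v) →ₗ[S] MM R S F (2 * j₀v + 1))
    (hc : LinearMap.det
        (LinearMap.id + bcd S F d (2 * j₀v) ∘ₗ c :
          MM R S F (2 * j₀v) →ₗ[S] MM R S F (2 * j₀v)) = 1)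
    (e' : (∀ j : Fin m, MM R S F (2 * (j : ℕ))) ≃ₗ[S] ∀ j : Fin m, MM R S F (2 * (j : ℕ) + 1)) :
    LinearMap.det (e'.symm.toLinearMap ∘ₗ
        (assembledMap S F d m σ
          + LinearMap.single S (fun j : Fin m => MM R S F (2 * (j : ℕ) + 1)) ⟨j₀v, hj₀⟩
              ∘ₗ c ∘ₗ LinearMap.proj (⟨j₀v, hj₀⟩ : Fin m)))
      = LinearMap.det (e'.symm.toLinearMap ∘ₗ assembledMap S F d m σ) := by
  classical
  have hbij := A_bijective S F d m σ hdd hσ hst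
  set Aeq := LinearEquiv.ofBijective _ hbij with hAeq
  have hfact : e'.symm.toLinearMap ∘ₗ
      (assembledMap S F d m σ
        + LinearMap.single S (fun j : Fin m => MM R S F (2 * (j : ℕ) + 1)) ⟨j₀v, hj₀⟩
            ∘ₗ c ∘ₗ LinearMap.proj (⟨j₀v, hj₀⟩ : Fin m))
      = (e'.symm.toLinearMap ∘ₗ assembledMap S F d m σ) ∘ₗ
        (LinearMap.id
          + (Aeq.symm.toLinearMap
              ∘ₗ LinearMap.single S (fun j : Fin m => MM R S F (2 * (j : ℕ) + 1)) ⟨j₀v, hj₀⟩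
              ∘ₗ c) ∘ₗ LinearMap.proj (⟨j₀v, hj₀⟩ : Fin m)) := by
    apply LinearMap.ext; intro x
    simp only [LinearMap.comp_apply, LinearMap.add_apply, LinearMap.id_apply]
    congr 1
    rw [map_add]
    congr 1
    exact (Aeq.apply_symm_apply _).symm
  rw [hfact, LinearMap.det_comp]
  have h2 : LinearMap.det
      (LinearMap.id
        + (Aeq.symm.toLinearMap
            ∘ₗ LinearMap.single S (fun j : Fin m => MM R S F (2 * (j : ℕ) + 1)) ⟨j₀v, hj₀⟩
            ∘ₗ c) ∘ₗ LinearMap.proj (⟨j₀v, hj₀⟩ : Fin m)) = 1 := by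
    rw [det_one_add_comm (LinearMap.proj (⟨j₀v, hj₀⟩ : Fin m))
      (Aeq.symm.toLinearMap
        ∘ₗ LinearMap.single S (fun j : Fin m => MM R S F (2 * (j : ℕ) + 1)) ⟨j₀v, hj₀⟩
        ∘ₗ c)]
    have hβ : LinearMap.proj (⟨j₀v, hj₀⟩ : Fin m) ∘ₗ
        (Aeq.symm.toLinearMap
          ∘ₗ LinearMap.single S (fun j : Fin m => MM R S F (2 * (j : ℕ) + 1)) ⟨j₀v, hj₀⟩
          ∘ₗ c)
        = bcd S F d (2 * j₀v) ∘ₗ c := by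
      apply LinearMap.ext; intro v
      simp only [LinearMap.comp_apply, LinearMap.proj_apply]
      exact Asymm_single_diag S F d m σ hdd hσ hbij j₀v hj₀ (c v)
    rw [hβ, hc]
  rw [h2, mul_one]


/-- Let `R ⊆ S` be commutative rings and `F` a bounded chain complex of
finitely generated free `R`-modules such that `F ⊗_R S` is exact.  Then choosing
`S`-linear splittings of the boundary exact sequences yields an `S`-module isomorphism
`(⊕_j F_{2j}) ⊗ S ≅ (⊕_j F_{2j+1}) ⊗ S`, and its determinant, as an element of
`Sˣ/Rˣ`, is independent of the choice of splittings: splittings exist, each assembled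
map is an isomorphism, and the determinants of any two differ by (the image of) a unit
of `R`. -/
theorem stmt4 [∀ i, Module.Finite R (F i)] [∀ i, Module.Free R (F i)]
    (hinj : Function.Injective (algebraMap R S))
    (n : ℕ) (hbound : ∀ i, n < i → Subsingleton (F i))
    (hdd : ∀ i, d i ∘ₗ d (i + 1) = 0)
    (hex0 : Function.Surjective (LinearMap.baseChange S (d 0)))
    (hex : ∀ i, LinearMap.range (LinearMap.baseChange S (d (i + 1)))
            = LinearMap.ker (LinearMap.baseChange S (d i))) :
    (∃ s, IsSplitting S F d s) ∧
    (∀ s, IsSplitting S F d s → Function.Bijective (assembledMap S F d (n + 1) s)) ∧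
    (∀ s s', IsSplitting S F d s → IsSplitting S F d s' →
      ∀ e' : (∀ j : Fin (n + 1), TensorProduct R S (F (2 * (j : ℕ))))
          ≃ₗ[S] ∀ j : Fin (n + 1), TensorProduct R S (F (2 * (j : ℕ) + 1)),
        (e' : _ →ₗ[S] _) = assembledMap S F d (n + 1) s' →
        ∃ u : Rˣ,
          LinearMap.det (e'.symm.toLinearMap ∘ₗ assembledMap S F d (n + 1) s)
            = algebraMap R S u) := by
  have hst : Subsingleton (MM R S F (2 * (n + 1))) :=
    subsingleton_MM S F (hbound _ (by omega))
  refine ⟨exists_splitting S F d n hbound hdd hex0 hex,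
    fun s hs => A_bijective S F d (n + 1) s hdd hs hst, ?_⟩
  intro s s' hs hs' e' he'
  refine ⟨1, ?_⟩
  rw [Units.val_one, map_one]
  have key : ∀ k, k ≤ 2 * n + 1 → ∃ σ, IsSplitting S F d σ ∧ (∀ i, i < k → σ i = s' i) ∧
      LinearMap.det (e'.symm.toLinearMap ∘ₗ assembledMap S F d (n + 1) σ)
        = LinearMap.det (e'.symm.toLinearMap ∘ₗ assembledMap S F d (n + 1) s) := by
    intro k
    induction k with
    | zero => exact fun _ => ⟨s, hs, fun i hi => absurd hi (Nat.not_lt_zero _), rfl⟩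
    | succ k ih =>
      intro hk
      obtain ⟨σ, hσ, hag, hdet⟩ := ih (by omega)
      refine ⟨moveS S F d σ s' k, moveS_splitting S F d σ s' k hdd hσ hs' hag, ?_, ?_⟩
      · intro i hi
        rcases Nat.lt_or_ge i k with h | h
        · rw [moveS_other S F d σ s' k i (by omega) (by omega)]; exact hag i h
        · have hik : i = k := by omega
          subst hik
          exact moveS_at_k S F d σ s' i
      · have hdt := dt_zero S F d k σ s' hσ hs' hag
        rcases Nat.even_or_odd k with hpar | hpar
        · obtain ⟨a, rfl⟩ : ∃ a, k = 2 * a := by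
            rcases hpar with ⟨r, hr⟩; exact ⟨r, by omega⟩
          have hj₀ : a < n + 1 := by omega
          have hagree : ∀ j : Fin (n + 1), j ≠ ⟨a, hj₀⟩ →
              moveS S F d σ s' (2 * a) (2 * (j : ℕ)) = σ (2 * (j : ℕ)) := by
            intro j hne
            have hva : (j : ℕ) ≠ a := fun h => hne (Fin.ext h)
            exact moveS_other S F d σ s' (2 * a) (2 * (j : ℕ)) (by omega) (by omega)
          rw [assembled_sub_single S F d (n + 1) σ (moveS S F d σ s' (2 * a)) a hj₀ hagree]
          have hc : LinearMap.det
              (LinearMap.id + bcd S F d (2 * a)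
                  ∘ₗ (moveS S F d σ s' (2 * a) (2 * a) - σ (2 * a)) :
                MM R S F (2 * a) →ₗ[S] MM R S F (2 * a)) = 1 := by
            rw [moveS_at_k S F d σ s' (2 * a), hdt, add_zero, LinearMap.det_id]
          rw [det_move S F d (n + 1) σ hdd hσ hst a hj₀
            (moveS S F d σ s' (2 * a) (2 * a) - σ (2 * a)) hc e']
          exact hdet
        · obtain ⟨a, rfl⟩ : ∃ a, k = 2 * a + 1 := by
            rcases hpar with ⟨r, hr⟩; exact ⟨r, by omega⟩
          have hj₀ : a + 1 < n + 1 := by omega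
          have hagree : ∀ j : Fin (n + 1), j ≠ ⟨a + 1, hj₀⟩ →
              moveS S F d σ s' (2 * a + 1) (2 * (j : ℕ)) = σ (2 * (j : ℕ)) := by
            intro j hne
            have hva : (j : ℕ) ≠ a + 1 := fun h => hne (Fin.ext h)
            exact moveS_other S F d σ s' (2 * a + 1) (2 * (j : ℕ)) (by omega) (by omega)
          rw [assembled_sub_single S F d (n + 1) σ (moveS S F d σ s' (2 * a + 1))
            (a + 1) hj₀ hagree]
          have hτ : moveS S F d σ s' (2 * a + 1) (2 * (a + 1))
              = HSub.hSub (β := MM R S F (2 * (a + 1)) →ₗ[S] MM R S F (2 * (a + 1) + 1))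
                  (σ (2 * (a + 1)))
                  (σ (2 * (a + 1))
                    ∘ₗ (s' (2 * a + 1) - σ (2 * a + 1)) ∘ₗ bcd S F d (2 * a + 1)) :=
            moveS_at_k1 S F d σ s' (2 * a + 1)
          have hc : LinearMap.det
              (LinearMap.id + bcd S F d (2 * (a + 1))
                  ∘ₗ (moveS S F d σ s' (2 * a + 1) (2 * (a + 1)) - σ (2 * (a + 1))) :
                MM R S F (2 * (a + 1)) →ₗ[S] MM R S F (2 * (a + 1))) = 1 := by
            rw [hτ, show ∀ x y : MM R S F (2 * (a + 1)) →ₗ[S] MM R S F (2 * (a + 1) + 1), x - y - x = -y from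
                fun x y => sub_sub_cancel_left x y, LinearMap.comp_neg]
            have hsimp : bcd S F d (2 * (a + 1)) ∘ₗ (σ (2 * (a + 1))
                  ∘ₗ (s' (2 * a + 1) - σ (2 * a + 1)) ∘ₗ bcd S F d (2 * a + 1))
                = (s' (2 * a + 1) - σ (2 * a + 1)) ∘ₗ bcd S F d (2 * a + 1) := by
              apply LinearMap.ext; intro v
              simp only [LinearMap.comp_apply, LinearMap.sub_apply]
              have h1 := LinearMap.congr_fun (hσ.2 (2 * a + 1))
                ((s' (2 * a + 1)) ((bcd S F d (2 * a + 1)) v)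
                  - (σ (2 * a + 1)) ((bcd S F d (2 * a + 1)) v))
              simp only [LinearMap.add_apply, LinearMap.comp_apply, LinearMap.id_apply] at h1
              have h3 : bcd S F d (2 * a + 1)
                  ((s' (2 * a + 1)) ((bcd S F d (2 * a + 1)) v)
                    - (σ (2 * a + 1)) ((bcd S F d (2 * a + 1)) v)) = 0 := by
                have := LinearMap.congr_fun hdt ((bcd S F d (2 * a + 1)) v)
                simpa [LinearMap.comp_apply, LinearMap.sub_apply] using this
              rw [h3, map_zero, add_zero] at h1
              exact h1
            rw [hsimp, ← LinearMap.neg_comp]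
            show LinearMap.det
              (HAdd.hAdd (α := MM R S F (2 * a + 1 + 1) →ₗ[S] MM R S F (2 * a + 1 + 1))
                (β := MM R S F (2 * a + 1 + 1) →ₗ[S] MM R S F (2 * a + 1 + 1))
                LinearMap.id
                ((-(s' (2 * a + 1) - σ (2 * a + 1))) ∘ₗ bcd S F d (2 * a + 1))) = 1
            rw [det_one_add_comm (bcd S F d (2 * a + 1))
                (-(s' (2 * a + 1) - σ (2 * a + 1))),
              LinearMap.comp_neg, hdt, show -(0 : MM R S F (2 * a + 1) →ₗ[S] MM R S F (2 * a + 1)) = 0 from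
                LinearMap.ext fun _ => by simp, add_zero, LinearMap.det_id]
          rw [det_move S F d (n + 1) σ hdd hσ hst (a + 1) hj₀
            (moveS S F d σ s' (2 * a + 1) (2 * (a + 1)) - σ (2 * (a + 1))) hc e']
          exact hdet
  obtain ⟨σ, hσ, hag, hdet⟩ := key (2 * n + 1) le_rfl
  have hAeq : assembledMap S F d (n + 1) σ = assembledMap S F d (n + 1) s' := by
    unfold assembledMap
    congr 1
    funext j
    rw [hag (2 * (j : ℕ)) (by have := j.isLt; omega)]
  have hone : e'.symm.toLinearMap ∘ₗ assembledMap S F d (n + 1) s' = LinearMap.id := by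
    rw [← he']
    apply LinearMap.ext; intro v
    simp
  rw [← hdet, hAeq, hone, LinearMap.det_id]


end
end

section
/- Let K be a number field, S a finite set of places of K containing the infinite places, and X the kernel of the degree map on the free abelian group on S. Then the rank of X as a Z-module equals |S| - 1, and the Dirichlet regulator map λ : O_{K,S}^× ⊗ R → X ⊗ R, u ⊗ 1 ↦ Σ_{w ∈ S} log‖u‖_w · w, is an isomorphism of R-vector spaces. -/
noncomputable section

open NumberField IsDedekindDomain

/-- The integer `ord(x)` such that a nonzero value `x` of a discrete valuation is
`ofAdd (ord x)` (and `0` for `x = 0`). -/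
def ordOfValue (x : WithZero (Multiplicative ℤ)) : ℤ :=
  if h : x = 0 then 0 else Multiplicative.toAdd (WithZero.unzero h)

variable (K : Type*) [Field K] [NumberField K]

/-- The set `S` of places of `K`: all infinite places together with a finite set `T` of
finite places (primes of `𝓞 K`). -/
def placesOf (T : Finset (HeightOneSpectrum (𝓞 K))) : Type _ :=
  InfinitePlace K ⊕ {v // v ∈ T}

instance (T : Finset (HeightOneSpectrum (𝓞 K))) : Fintype (placesOf K T) :=
  inferInstanceAs (Fintype (InfinitePlace K ⊕ {v // v ∈ T}))

/-- The group of `S`-units of `K`: units whose valuation is trivial at every finite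
place outside `S`. -/
def sUnits (T : Finset (HeightOneSpectrum (𝓞 K))) : Set Kˣ :=
  {u : Kˣ | ∀ v : HeightOneSpectrum (𝓞 K), v ∉ T → v.valuation K ((u : K)) = 1}

/-- The Dirichlet regulator (logarithmic) map `u ↦ (log‖u‖_w)_{w ∈ S}`, with the
normalised absolute values: `‖u‖_w = w(u)^{mult w}` at an infinite place `w` and
`‖u‖_v = (N v)^{ord_v(u)}` at a finite place `v`. -/
def logMap (T : Finset (HeightOneSpectrum (𝓞 K))) (u : Kˣ) : placesOf K T → ℝ :=
  fun x => match x with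
  | .inl w => (w.mult : ℝ) * Real.log (w (u : K))
  | .inr v => (ordOfValue (v.1.valuation K ((u : K))) : ℝ)
      * Real.log (Ideal.absNorm v.1.asIdeal)

/-- The sum-of-coordinates ("degree") map, with coefficients in `R`. -/
def degreeMap (R : Type*) [CommRing R] (T : Finset (HeightOneSpectrum (𝓞 K))) :
    (placesOf K T → R) →ₗ[R] R :=
  ∑ x : placesOf K T, LinearMap.proj x

/-! ### Auxiliary lemmas about `ordOfValue` -/

lemma ordOfValue_coe (m : Multiplicative ℤ) :
    ordOfValue (m : WithZero (Multiplicative ℤ)) = Multiplicative.toAdd m := by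
  rw [ordOfValue, dif_neg WithZero.coe_ne_zero, WithZero.unzero_coe]

lemma ordOfValue_one : ordOfValue (1 : WithZero (Multiplicative ℤ)) = 0 := by
  simpa using ordOfValue_coe 1

lemma ordOfValue_mul {x y : WithZero (Multiplicative ℤ)} (hx : x ≠ 0) (hy : y ≠ 0) :
    ordOfValue (x * y) = ordOfValue x + ordOfValue y := by
  obtain ⟨mx, rfl⟩ := WithZero.ne_zero_iff_exists.mp hx
  obtain ⟨my, rfl⟩ := WithZero.ne_zero_iff_exists.mp hy
  rw [← WithZero.coe_mul, ordOfValue_coe, ordOfValue_coe, ordOfValue_coe]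
  rfl

lemma eq_one_of_ordOfValue_eq_zero {x : WithZero (Multiplicative ℤ)} (hx : x ≠ 0)
    (h : ordOfValue x = 0) : x = 1 := by
  obtain ⟨m, rfl⟩ := WithZero.ne_zero_iff_exists.mp hx
  rw [ordOfValue_coe] at h
  have : m = 1 := by
    have := congrArg Multiplicative.ofAdd h
    simpa using this
  rw [this, WithZero.coe_one]

lemma ordOfValue_ofAdd (n : ℤ) :
    ordOfValue ((Multiplicative.ofAdd n : Multiplicative ℤ) : WithZero (Multiplicative ℤ)) = n :=
  ordOfValue_coe _

namespace StmtAux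

open IsDedekindDomain.HeightOneSpectrum NumberField.InfinitePlace
open scoped nonZeroDivisors Classical

variable {K}

/-- Norms of height-one primes are `> 1`. -/
lemma one_lt_absNorm (v : HeightOneSpectrum (𝓞 K)) : 1 < Ideal.absNorm v.asIdeal := by
  have h0 : Ideal.absNorm v.asIdeal ≠ 0 := by
    rw [Ideal.absNorm_ne_zero_iff_mem_nonZeroDivisors]
    exact mem_nonZeroDivisors_of_ne_zero v.ne_bot
  have h1 : Ideal.absNorm v.asIdeal ≠ 1 := by
    rw [Ne, Ideal.absNorm_eq_one_iff]
    exact v.isPrime.ne_top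
  omega

lemma log_absNorm_pos (v : HeightOneSpectrum (𝓞 K)) :
    0 < Real.log (Ideal.absNorm v.asIdeal) := by
  apply Real.log_pos
  exact_mod_cast one_lt_absNorm v

lemma val_ne_zero (v : HeightOneSpectrum (𝓞 K)) (u : Kˣ) : v.valuation K (u : K) ≠ 0 :=
  (Valuation.ne_zero_iff _).mpr u.ne_zero

lemma logMap_one (T : Finset (HeightOneSpectrum (𝓞 K))) (x : placesOf K T) :
    logMap K T 1 x = 0 := by
  cases x with
  | inl w => simp [logMap]
  | inr v => simp [logMap, ordOfValue_one]

lemma logMap_mul (T : Finset (HeightOneSpectrum (𝓞 K))) (u₁ u₂ : Kˣ) (x : placesOf K T) :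
    logMap K T (u₁ * u₂) x = logMap K T u₁ x + logMap K T u₂ x := by
  cases x with
  | inl w =>
      show (w.mult : ℝ) * Real.log (w ((u₁ * u₂ : Kˣ) : K)) = _
      rw [Units.val_mul, map_mul, Real.log_mul, mul_add]
      · rfl
      · simpa using u₁.ne_zero
      · simpa using u₂.ne_zero
  | inr v =>
      show (ordOfValue (v.1.valuation K (((u₁ * u₂ : Kˣ) : K))) : ℝ) * _ = _
      rw [Units.val_mul, map_mul, ordOfValue_mul (val_ne_zero v.1 u₁) (val_ne_zero v.1 u₂)]
      push_cast
      ring_nf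
      rfl

lemma logMap_pow (T : Finset (HeightOneSpectrum (𝓞 K))) (u : Kˣ) (n : ℕ) (x : placesOf K T) :
    logMap K T (u ^ n) x = n * logMap K T u x := by
  induction n with
  | zero => simpa using logMap_one T x
  | succ n ih =>
      rw [pow_succ, logMap_mul, ih]
      push_cast
      ring

/-- Fractional-ideal count of a principal fractional ideal versus the valuation. -/
lemma count_spanSingleton (v : HeightOneSpectrum (𝓞 K)) {x : K} (hx : x ≠ 0) :
    FractionalIdeal.count K v (FractionalIdeal.spanSingleton (𝓞 K)⁰ x) =
      - ordOfValue (v.valuation K x) := by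
  obtain ⟨⟨a, b⟩, hab⟩ := IsLocalization.mk'_surjective (𝓞 K)⁰ x
  change IsLocalization.mk' K a b = _ at hab
  have ha : a ≠ 0 := by
    rintro rfl
    rw [IsLocalization.mk'_zero] at hab
    exact hx hab.symm
  have hb : (b : 𝓞 K) ≠ 0 := nonZeroDivisors.coe_ne_zero b
  have hspan : FractionalIdeal.spanSingleton (𝓞 K)⁰ x ≠ 0 :=
    FractionalIdeal.spanSingleton_ne_zero_iff.mpr hx
  have haJ : FractionalIdeal.spanSingleton (𝓞 K)⁰ x =
      FractionalIdeal.spanSingleton (𝓞 K)⁰ ((algebraMap (𝓞 K) K) (b : 𝓞 K))⁻¹ *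
        ↑(Ideal.span {a} : Ideal (𝓞 K)) := by
    rw [FractionalIdeal.coeIdeal_span_singleton,
      FractionalIdeal.spanSingleton_mul_spanSingleton, ← hab,
      IsFractionRing.mk'_eq_div, div_eq_mul_inv, mul_comm]
  rw [FractionalIdeal.count_well_defined K v hspan haJ]
  have hval : v.valuation K x = v.intValuation a / v.intValuation (b : 𝓞 K) := by
    rw [← hab]; exact valuation_of_mk' v
  rw [hval, intValuation_apply, intValuation_apply, v.intValuationDef_if_neg ha,
    v.intValuationDef_if_neg hb, WithZero.exp, WithZero.exp, ← WithZero.coe_div, ordOfValue_coe]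
  simp only [toAdd_div, toAdd_ofAdd]
  ring

/-- The key integral product formula: for a nonzero algebraic integer `a` and a finite set `F`
of primes outside of which `a` is a `v`-adic unit, the sum of all normalized logs vanishes. -/
lemma intSum (a : 𝓞 K) (ha : a ≠ 0) (F : Finset (HeightOneSpectrum (𝓞 K)))
    (hF : ∀ v ∉ F, v.intValuationDef a = 1) :
    (∑ w : InfinitePlace K, (w.mult : ℝ) * Real.log (w (algebraMap (𝓞 K) K a))) +
      ∑ v ∈ F, (ordOfValue (v.valuation K (algebraMap (𝓞 K) K a)) : ℝ) *
        Real.log (Ideal.absNorm v.asIdeal) = 0 := by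
  classical
  have haK : algebraMap (𝓞 K) K a ≠ 0 := by
    simpa using (map_ne_zero_iff _ (IsFractionRing.injective (𝓞 K) K)).mpr ha
  set c : HeightOneSpectrum (𝓞 K) → ℕ := fun v =>
    (Associates.mk v.asIdeal).count (Associates.mk (Ideal.span {a})).factors with hc
  have hspan : (Ideal.span {a} : Ideal (𝓞 K)) ≠ 0 := by
    simpa [Ideal.span_singleton_eq_bot] using ha
  have hcount0 : ∀ v ∉ F, c v = 0 := by
    intro v hv
    have h1 := hF v hv
    rw [v.intValuationDef_if_neg ha] at h1
    have : (-(c v : ℤ)) = 0 := by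
      have := WithZero.coe_inj.mp (h1.trans (WithZero.coe_one).symm)
      simpa using congrArg Multiplicative.toAdd this
    simpa using this
  have hord : ∀ v : HeightOneSpectrum (𝓞 K),
      ordOfValue (v.valuation K (algebraMap (𝓞 K) K a)) = -(c v : ℤ) := by
    intro v
    rw [valuation_of_algebraMap, intValuation_apply, v.intValuationDef_if_neg ha, WithZero.exp,
      ordOfValue_coe, toAdd_ofAdd]
  have hfact : (Ideal.span {a} : Ideal (𝓞 K)) = ∏ v ∈ F, v.asIdeal ^ (c v) := by
    have h1 : ∏ᶠ w : HeightOneSpectrum (𝓞 K), w.maxPowDividing (Ideal.span {a}) =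
        ∏ w ∈ F, w.maxPowDividing (Ideal.span {a}) := by
      apply finprod_eq_prod_of_mulSupport_subset
      intro w hw
      by_contra hwF
      apply hw
      show w.maxPowDividing (Ideal.span {a}) = 1
      rw [HeightOneSpectrum.maxPowDividing]
      have : (Associates.mk w.asIdeal).count (Associates.mk (Ideal.span {a})).factors = c w := by
        rw [hc]
      rw [this, hcount0 w hwF, pow_zero]
    rw [← Ideal.finprod_heightOneSpectrum_factorization hspan, h1]
    apply Finset.prod_congr rfl
    intro w _
    rw [HeightOneSpectrum.maxPowDividing]
  have hNpos : ∀ v : HeightOneSpectrum (𝓞 K), (0:ℝ) < (Ideal.absNorm v.asIdeal : ℝ) := by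
    intro v
    have := one_lt_absNorm v
    positivity
  have hNab : ((Ideal.absNorm (Ideal.span {a}) : ℝ)) =
      ∏ v ∈ F, (Ideal.absNorm v.asIdeal : ℝ) ^ (c v) := by
    rw [hfact, map_prod]
    push_cast [map_pow]
    rfl
  -- the infinite part
  have hinf : (∑ w : InfinitePlace K, (w.mult : ℝ) * Real.log (w (algebraMap (𝓞 K) K a))) =
      Real.log (Ideal.absNorm (Ideal.span {a})) := by
    have hprod := prod_eq_abs_norm (algebraMap (𝓞 K) K a)
    have hlog := congrArg Real.log hprod
    rw [Real.log_prod] at hlog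
    · simp_rw [Real.log_pow] at hlog
      rw [hlog]
      have : |Algebra.norm ℚ (algebraMap (𝓞 K) K a)| = ((Ideal.absNorm (Ideal.span {a}) : ℚ)) := by
        rw [Ideal.absNorm_span_singleton, ← Algebra.coe_norm_int]
        push_cast
        rw [Nat.cast_natAbs]
        push_cast
        rfl
      rw [this]
      push_cast
      rfl
    · intro w _
      exact pow_ne_zero _ ((map_ne_zero w).mpr haK)
  -- the finite part
  have hfin : (∑ v ∈ F, (ordOfValue (v.valuation K (algebraMap (𝓞 K) K a)) : ℝ) *
      Real.log (Ideal.absNorm v.asIdeal)) = - Real.log (Ideal.absNorm (Ideal.span {a})) := by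
    rw [hNab, Real.log_prod]
    · rw [← Finset.sum_neg_distrib]
      apply Finset.sum_congr rfl
      intro v hv
      rw [Real.log_pow, hord v]
      push_cast
      ring
    · intro v _
      exact pow_ne_zero _ (ne_of_gt (hNpos v))
  rw [hinf, hfin, add_neg_cancel]

/-- Product formula for `S`-units. -/
lemma sum_logMap_zero (T : Finset (HeightOneSpectrum (𝓞 K))) (u : Kˣ)
    (hu : ∀ v ∉ T, v.valuation K (u : K) = 1) :
    ∑ x : placesOf K T, logMap K T u x = 0 := by
  classical
  obtain ⟨⟨a, b⟩, hab⟩ := IsLocalization.mk'_surjective (𝓞 K)⁰ ((u : K))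
  change IsLocalization.mk' K a b = _ at hab
  have ha : a ≠ 0 := by
    rintro rfl
    rw [IsLocalization.mk'_zero] at hab
    exact u.ne_zero hab.symm
  have hb : (b : 𝓞 K) ≠ 0 := nonZeroDivisors.coe_ne_zero b
  have hbu : algebraMap (𝓞 K) K (b : 𝓞 K) ≠ 0 :=
    (map_ne_zero_iff _ (IsFractionRing.injective (𝓞 K) K)).mpr hb
  have hmul : (u : K) * algebraMap (𝓞 K) K (b : 𝓞 K) = algebraMap (𝓞 K) K a := by
    rw [← hab]; exact IsLocalization.mk'_spec K a b
  have hspa : (Ideal.span {a} : Ideal (𝓞 K)) ≠ 0 := by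
    simpa [Ideal.span_singleton_eq_bot] using ha
  have hspb : (Ideal.span {(b : 𝓞 K)} : Ideal (𝓞 K)) ≠ 0 := by
    simpa [Ideal.span_singleton_eq_bot] using hb
  set F : Finset (HeightOneSpectrum (𝓞 K)) :=
    T ∪ (Ideal.finite_factors hspa).toFinset ∪ (Ideal.finite_factors hspb).toFinset with hF
  have hTF : T ⊆ F := by
    intro v hv; simp [hF, hv]
  have hFa : ∀ v ∉ F, v.intValuationDef a = 1 := by
    intro v hv
    have hnd : ¬ v.asIdeal ∣ Ideal.span {a} := by
      intro hdvd
      apply hv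
      simp only [hF, Finset.mem_union, Set.Finite.mem_toFinset, Set.mem_setOf_eq]
      exact Or.inl (Or.inr hdvd)
    have hle := v.intValuation_le_one a
    have hlt := v.intValuation_lt_one_iff_dvd a
    rcases lt_or_eq_of_le hle with h | h
    · exact absurd (hlt.mp h) hnd
    · exact h
  have hFb : ∀ v ∉ F, v.intValuationDef (b : 𝓞 K) = 1 := by
    intro v hv
    have hnd : ¬ v.asIdeal ∣ Ideal.span {(b : 𝓞 K)} := by
      intro hdvd
      apply hv
      simp only [hF, Finset.mem_union, Set.Finite.mem_toFinset, Set.mem_setOf_eq]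
      exact Or.inr hdvd
    have hle := v.intValuation_le_one (b : 𝓞 K)
    have hlt := v.intValuation_lt_one_iff_dvd (b : 𝓞 K)
    rcases lt_or_eq_of_le hle with h | h
    · exact absurd (hlt.mp h) hnd
    · exact h
  -- general "full" sum
  set G : K → ℝ := fun y =>
    (∑ w : InfinitePlace K, (w.mult : ℝ) * Real.log (w y)) +
      ∑ v ∈ F, (ordOfValue (v.valuation K y) : ℝ) * Real.log (Ideal.absNorm v.asIdeal) with hG
  have hGmul : ∀ y z : K, y ≠ 0 → z ≠ 0 → G (y * z) = G y + G z := by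
    intro y z hy hz
    rw [hG]
    simp only
    have h1 : (∑ w : InfinitePlace K, (w.mult : ℝ) * Real.log (w (y * z))) =
        ∑ w : InfinitePlace K, ((w.mult : ℝ) * Real.log (w y) + (w.mult : ℝ) * Real.log (w z)) := by
      apply Finset.sum_congr rfl
      intro w _
      rw [map_mul, Real.log_mul ((map_ne_zero w).mpr hy) ((map_ne_zero w).mpr hz), mul_add]
    have h2 : (∑ v ∈ F, (ordOfValue (v.valuation K (y * z)) : ℝ) *
        Real.log (Ideal.absNorm v.asIdeal)) =
        ∑ v ∈ F, ((ordOfValue (v.valuation K y) : ℝ) * Real.log (Ideal.absNorm v.asIdeal) +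
          (ordOfValue (v.valuation K z) : ℝ) * Real.log (Ideal.absNorm v.asIdeal)) := by
      apply Finset.sum_congr rfl
      intro v _
      rw [map_mul, ordOfValue_mul ((Valuation.ne_zero_iff _).mpr hy)
        ((Valuation.ne_zero_iff _).mpr hz)]
      push_cast
      ring
    rw [h1, h2, Finset.sum_add_distrib, Finset.sum_add_distrib]
    ring
  have hGa : G (algebraMap (𝓞 K) K a) = 0 := intSum a ha F hFa
  have hGb : G (algebraMap (𝓞 K) K (b : 𝓞 K)) = 0 := intSum (b : 𝓞 K) hb F hFb
  have hGu : G (u : K) = 0 := by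
    have := hGmul (u : K) (algebraMap (𝓞 K) K (b : 𝓞 K)) u.ne_zero hbu
    rw [hmul, hGa, hGb] at this
    linarith
  -- identify the full sum over places with G
  have hsplit : ∑ x : placesOf K T, logMap K T u x =
      (∑ w : InfinitePlace K, logMap K T u (Sum.inl w)) +
        ∑ v : {v // v ∈ T}, logMap K T u (Sum.inr v) :=
    Fintype.sum_sum_type _
  have hsub : (∑ v : {v // v ∈ T}, logMap K T u (Sum.inr v)) =
      ∑ v ∈ T, (ordOfValue (v.valuation K (u : K)) : ℝ) * Real.log (Ideal.absNorm v.asIdeal) := by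
    rw [← Finset.sum_coe_sort T
      (fun v => (ordOfValue (v.valuation K (u : K)) : ℝ) * Real.log (Ideal.absNorm v.asIdeal))]
    rfl
  have hTsum : (∑ v ∈ T, (ordOfValue (v.valuation K (u : K)) : ℝ) *
      Real.log (Ideal.absNorm v.asIdeal)) =
      ∑ v ∈ F, (ordOfValue (v.valuation K (u : K)) : ℝ) * Real.log (Ideal.absNorm v.asIdeal) := by
    apply Finset.sum_subset hTF
    intro v _ hvT
    rw [hu v hvT, ordOfValue_one]
    simp
  rw [hsplit, hsub, hTsum]
  exact hGu

/-- Units of the ring of integers have trivial valuations everywhere. -/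
lemma unit_valuation_eq_one (g : (𝓞 K)ˣ) (v : HeightOneSpectrum (𝓞 K)) :
    v.valuation K (algebraMap (𝓞 K) K (g : 𝓞 K)) = 1 := by
  have hmul : v.valuation K (algebraMap (𝓞 K) K (g : 𝓞 K)) *
      v.valuation K (algebraMap (𝓞 K) K ((g⁻¹ : (𝓞 K)ˣ) : 𝓞 K)) = 1 := by
    rw [← map_mul, ← map_mul]
    norm_num
  have ha : v.valuation K (algebraMap (𝓞 K) K (g : 𝓞 K)) ≤ 1 := v.valuation_le_one _
  have hb : v.valuation K (algebraMap (𝓞 K) K ((g⁻¹ : (𝓞 K)ˣ) : 𝓞 K)) ≤ 1 :=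
    v.valuation_le_one _
  refine le_antisymm ha ?_
  calc (1 : WithZero (Multiplicative ℤ)) = _ * _ := hmul.symm
    _ ≤ v.valuation K (algebraMap (𝓞 K) K (g : 𝓞 K)) * 1 := mul_le_mul_right hb _
    _ = v.valuation K (algebraMap (𝓞 K) K (g : 𝓞 K)) := mul_one _

/-- For every height-one prime `v` there is an element of `K` which is a unit at every other
prime and a non-unit at `v` (a generator of a power of `v` which is principal). -/
lemma exists_alpha (v : HeightOneSpectrum (𝓞 K)) :
    ∃ α : Kˣ, (∀ v' : HeightOneSpectrum (𝓞 K), v' ≠ v → v'.valuation K (α : K) = 1) ∧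
      v.valuation K (α : K) ≠ 1 := by
  classical
  have hvmem : v.asIdeal ∈ (Ideal (𝓞 K))⁰ :=
    mem_nonZeroDivisors_of_ne_zero v.ne_bot
  set n : ℕ := Fintype.card (ClassGroup (𝓞 K)) with hn
  have hn0 : n ≠ 0 := Fintype.card_ne_zero
  have hpowmem : v.asIdeal ^ n ∈ (Ideal (𝓞 K))⁰ := pow_mem hvmem n
  have hprin : Submodule.IsPrincipal (v.asIdeal ^ n) := by
    rw [← ClassGroup.mk0_eq_one_iff hpowmem]
    have heq : (⟨v.asIdeal ^ n, hpowmem⟩ : (Ideal (𝓞 K))⁰) = ⟨v.asIdeal, hvmem⟩ ^ n := by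
      ext; simp
    rw [heq, map_pow]
    exact pow_card_eq_one
  obtain ⟨π, hπ⟩ := hprin
  have hπ0 : π ≠ 0 := by
    rintro rfl
    apply pow_ne_zero n v.ne_bot
    rw [hπ]
    simp
  have hπK : algebraMap (𝓞 K) K π ≠ 0 :=
    (map_ne_zero_iff _ (IsFractionRing.injective (𝓞 K) K)).mpr hπ0
  refine ⟨Units.mk0 _ hπK, ?_, ?_⟩
  · intro v' hv'
    have hnd : ¬ v'.asIdeal ∣ Ideal.span {π} := by
      rw [Ideal.span, ← hπ]
      intro hdvd
      have hdvd1 : v'.asIdeal ∣ v.asIdeal :=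
        (Prime.dvd_of_dvd_pow (Ideal.prime_of_isPrime v'.ne_bot v'.isPrime)) hdvd
      have : v'.asIdeal = v.asIdeal := by
        obtain ⟨c, hc⟩ := hdvd1
        rcases (Prime.irreducible (Ideal.prime_of_isPrime v.ne_bot v.isPrime)).isUnit_or_isUnit
          hc with h | h
        · exact absurd h (Ideal.prime_of_isPrime v'.ne_bot v'.isPrime).not_unit
        · rw [Ideal.isUnit_iff] at h
          rw [hc, h, Ideal.mul_top]
      exact hv' (HeightOneSpectrum.ext this)
    show v'.valuation K (algebraMap (𝓞 K) K π) = 1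
    rw [valuation_of_algebraMap]
    have hle := v'.intValuation_le_one π
    rcases lt_or_eq_of_le hle with h | h
    · exact absurd ((v'.intValuation_lt_one_iff_dvd π).mp h) hnd
    · exact h
  · show v.valuation K (algebraMap (𝓞 K) K π) ≠ 1
    rw [valuation_of_algebraMap]
    have hdvd : v.asIdeal ∣ Ideal.span {π} := by
      rw [Ideal.span, ← hπ]
      exact dvd_pow_self _ hn0
    have := (v.intValuation_lt_one_iff_dvd π).mpr hdvd
    exact ne_of_lt this

end StmtAux


namespace StmtAux

open IsDedekindDomain.HeightOneSpectrum NumberField.InfinitePlace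
open scoped nonZeroDivisors Classical

variable {K}

lemma degreeMap_apply (R : Type*) [CommRing R] (T : Finset (HeightOneSpectrum (𝓞 K)))
    (f : placesOf K T → R) : degreeMap K R T f = ∑ x : placesOf K T, f x := by
  simp [degreeMap]

set_option synthInstance.maxHeartbeats 1000000 in
lemma part1 (T : Finset (HeightOneSpectrum (𝓞 K))) :
    Module.finrank ℤ (LinearMap.ker (degreeMap K ℤ T)) = Fintype.card (placesOf K T) - 1 := by
  classical
  obtain ⟨w⟩ := (inferInstance : Nonempty (InfinitePlace K))
  have hne : Nonempty (placesOf K T) := ⟨Sum.inl w⟩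
  set x₀ : placesOf K T := Sum.inl w with hx₀
  set D := degreeMap K ℤ T with hD
  have hDsingle : ∀ n : ℤ, D (Pi.single x₀ n) = n := by
    intro n
    rw [degreeMap_apply]
    rw [Finset.sum_pi_single' x₀ n Finset.univ]
    simp
  let s : ℤ →ₗ[ℤ] (placesOf K T → ℤ) := LinearMap.single ℤ (fun _ => ℤ) x₀
  let φ : (LinearMap.ker D × ℤ) →ₗ[ℤ] (placesOf K T → ℤ) :=
    (LinearMap.ker D).subtype.comp (LinearMap.fst ℤ _ _) + s.comp (LinearMap.snd ℤ _ _)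
  have hφapp : ∀ p : LinearMap.ker D × ℤ, φ p = (p.1 : placesOf K T → ℤ) + Pi.single x₀ p.2 :=
    fun p => rfl
  have hφ : Function.Bijective φ := by
    constructor
    · intro p q hpq
      rw [hφapp, hφapp] at hpq
      have h2 : p.2 = q.2 := by
        have := congrArg D hpq
        rw [map_add, map_add, hDsingle, hDsingle, p.1.2, q.1.2, zero_add, zero_add] at this
        exact this
      have h1 : (p.1 : placesOf K T → ℤ) = (q.1 : placesOf K T → ℤ) := by
        rw [h2] at hpq
        exact add_right_cancel hpq
      exact Prod.ext (Subtype.ext h1) h2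
    · intro f
      refine ⟨⟨⟨f - Pi.single x₀ (D f), ?_⟩, D f⟩, ?_⟩
      · rw [LinearMap.mem_ker, map_sub, hDsingle, sub_self]
      · rw [hφapp]
        simp
  have heq := LinearEquiv.finrank_eq (LinearEquiv.ofBijective φ hφ)
  rw [Module.finrank_prod, Module.finrank_pi, Module.finrank_self] at heq
  have hpos : 0 < Fintype.card (placesOf K T) := Fintype.card_pos
  omega

lemma infinite_place_eq_one {u : Kˣ} {w : InfinitePlace K}
    (h : (w.mult : ℝ) * Real.log (w (u : K)) = 0) : w (u : K) = 1 := by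
  have hm : (w.mult : ℝ) ≠ 0 := by
    have := NumberField.InfinitePlace.mult_pos (w := w)
    positivity
  have hlog : Real.log (w (u : K)) = 0 := by
    rcases mul_eq_zero.mp h with h' | h'
    · exact absurd h' hm
    · exact h'
  have hw0 : w (u : K) ≠ 0 := (map_ne_zero w).mpr u.ne_zero
  have hwnn : 0 ≤ w (u : K) := AbsoluteValue.nonneg _ _
  rcases Real.log_eq_zero.mp hlog with h' | h' | h'
  · exact absurd h' hw0
  · exact h'
  · linarith

lemma part4 (T : Finset (HeightOneSpectrum (𝓞 K))) (u : Kˣ) (hu : u ∈ sUnits K T) :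
    (∀ x, logMap K T u x = 0) ↔ ∃ m : ℕ, m ≠ 0 ∧ u ^ m = 1 := by
  constructor
  · intro h
    have hval : ∀ v : HeightOneSpectrum (𝓞 K), v.valuation K (u : K) = 1 := by
      intro v
      by_cases hvT : v ∈ T
      · have h0 := h (Sum.inr ⟨v, hvT⟩)
        have hlog : Real.log (Ideal.absNorm v.asIdeal) ≠ 0 := ne_of_gt (log_absNorm_pos v)
        have hco : (ordOfValue (v.valuation K (u : K)) : ℝ) = 0 := by
          rcases mul_eq_zero.mp h0 with h' | h'
          · exact h'
          · exact absurd h' hlog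
        have hord : ordOfValue (v.valuation K (u : K)) = 0 := by exact_mod_cast hco
        exact eq_one_of_ordOfValue_eq_zero (val_ne_zero v u) hord
      · exact hu v hvT
    have hvalinv : ∀ v : HeightOneSpectrum (𝓞 K), v.valuation K ((u⁻¹ : Kˣ) : K) = 1 := by
      intro v
      rw [Units.val_inv_eq_inv_val, map_inv₀, hval v, inv_one]
    have hint : ∀ y : Kˣ, (∀ v : HeightOneSpectrum (𝓞 K), v.valuation K (y : K) = 1) →
        ∃ z : 𝓞 K, algebraMap (𝓞 K) K z = (y : K) := by
      intro y hy
      have hne : FractionalIdeal.spanSingleton (𝓞 K)⁰ (y : K) ≠ 0 :=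
        FractionalIdeal.spanSingleton_ne_zero_iff.mpr y.ne_zero
      have h1 : FractionalIdeal.spanSingleton (𝓞 K)⁰ (y : K) = 1 := by
        have h2 := FractionalIdeal.finprod_heightOneSpectrum_factorization' K hne
        rw [← h2]
        have h3 : ∀ v : HeightOneSpectrum (𝓞 K),
            (v.asIdeal : FractionalIdeal (𝓞 K)⁰ K) ^
              (FractionalIdeal.count K v (FractionalIdeal.spanSingleton (𝓞 K)⁰ (y : K))) =
            (1 : FractionalIdeal (𝓞 K)⁰ K) := by
          intro v
          rw [count_spanSingleton v y.ne_zero, hy v, ordOfValue_one, neg_zero, zpow_zero]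
        rw [finprod_congr h3, finprod_one]
      have hmem : (y : K) ∈ (1 : FractionalIdeal (𝓞 K)⁰ K) := by
        rw [← h1]
        exact FractionalIdeal.mem_spanSingleton_self _ _
      exact (FractionalIdeal.mem_one_iff _).mp hmem
    obtain ⟨z, hz⟩ := hint u hval
    obtain ⟨zi, hzi⟩ := hint u⁻¹ hvalinv
    have hzz : z * zi = 1 := by
      apply IsFractionRing.injective (𝓞 K) K
      rw [map_mul, hz, hzi, map_one, Units.val_inv_eq_inv_val, mul_inv_cancel₀ u.ne_zero]
    have hzz' : zi * z = 1 := by rw [mul_comm]; exact hzz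
    let g : (𝓞 K)ˣ := ⟨z, zi, hzz, hzz'⟩
    have hg : g ∈ NumberField.Units.torsion K := by
      rw [NumberField.Units.mem_torsion]
      intro w
      show w (algebraMap (𝓞 K) K z) = 1
      rw [hz]
      exact infinite_place_eq_one (h (Sum.inl w))
    have hfin : IsOfFinOrder g := (CommGroup.mem_torsion g).mp hg
    obtain ⟨m, hm0, hgm⟩ := isOfFinOrder_iff_pow_eq_one.mp hfin
    refine ⟨m, by omega, ?_⟩
    ext
    push_cast
    rw [← hz]
    have : ((g ^ m : (𝓞 K)ˣ) : 𝓞 K) = 1 := by rw [hgm]; rfl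
    have hzm : (z : 𝓞 K) ^ m = 1 := this
    calc (algebraMap (𝓞 K) K z) ^ m = algebraMap (𝓞 K) K (z ^ m) := by rw [map_pow]
      _ = 1 := by rw [hzm, map_one]
  · rintro ⟨m, hm, hum⟩
    intro x
    have := logMap_pow (K := K) T u m x
    rw [hum, logMap_one] at this
    have hm' : (m : ℝ) ≠ 0 := Nat.cast_ne_zero.mpr hm
    field_simp at this
    exact (mul_eq_zero.mp this.symm).resolve_left hm'

end StmtAux

namespace StmtAux

open IsDedekindDomain.HeightOneSpectrum NumberField.InfinitePlace
open NumberField.Units NumberField.Units.dirichletUnitTheorem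
open scoped nonZeroDivisors Classical

variable {K}

/-- The canonical map `(𝓞 K)ˣ → Kˣ`. -/
def umap (g : (𝓞 K)ˣ) : Kˣ := Units.map (algebraMap (𝓞 K) K).toMonoidHom g

lemma umap_coe (g : (𝓞 K)ˣ) : ((umap g : Kˣ) : K) = algebraMap (𝓞 K) K (g : 𝓞 K) := rfl

lemma umap_mem_sUnits (T : Finset (HeightOneSpectrum (𝓞 K))) (g : (𝓞 K)ˣ) :
    umap g ∈ sUnits K T := by
  intro v _
  rw [umap_coe]
  exact unit_valuation_eq_one g v

lemma logMap_umap_inr (T : Finset (HeightOneSpectrum (𝓞 K))) (g : (𝓞 K)ˣ) (v : {v // v ∈ T}) :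
    logMap K T (umap g) (Sum.inr v) = 0 := by
  show (ordOfValue (v.1.valuation K ((umap g : Kˣ) : K)) : ℝ) * _ = 0
  rw [umap_coe, unit_valuation_eq_one, ordOfValue_one]
  simp

set_option maxHeartbeats 1000000 in
set_option synthInstance.maxHeartbeats 1000000 in
lemma part3 (T : Finset (HeightOneSpectrum (𝓞 K))) :
    Submodule.span ℝ (logMap K T '' sUnits K T) = LinearMap.ker (degreeMap K ℝ T) := by
  classical
  set V := Submodule.span ℝ (logMap K T '' sUnits K T) with hV
  have hmemker : ∀ u ∈ sUnits K T, logMap K T u ∈ LinearMap.ker (degreeMap K ℝ T) := by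
    intro u hu
    rw [LinearMap.mem_ker, degreeMap_apply]
    exact sum_logMap_zero T u hu
  apply le_antisymm
  · rw [Submodule.span_le]
    rintro _ ⟨u, hu, rfl⟩
    exact hmemker u hu
  intro f hf
  -- the alpha family
  set A : {v // v ∈ T} → Kˣ := fun v => (exists_alpha v.1).choose with hA
  have hA1 : ∀ v : {v // v ∈ T}, ∀ v' : HeightOneSpectrum (𝓞 K), v' ≠ v.1 →
      v'.valuation K ((A v : Kˣ) : K) = 1 := fun v => (exists_alpha v.1).choose_spec.1
  have hA2 : ∀ v : {v // v ∈ T}, v.1.valuation K ((A v : Kˣ) : K) ≠ 1 :=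
    fun v => (exists_alpha v.1).choose_spec.2
  have hAmem : ∀ v : {v // v ∈ T}, A v ∈ sUnits K T := by
    intro v v' hv'
    exact hA1 v v' (by rintro rfl; exact hv' v.2)
  have hAdiag : ∀ v v' : {v // v ∈ T}, v ≠ v' → logMap K T (A v) (Sum.inr v') = 0 := by
    intro v v' hne
    show (ordOfValue (v'.1.valuation K ((A v : Kˣ) : K)) : ℝ) * _ = 0
    have hne' : v'.1 ≠ v.1 := fun h => hne (Subtype.ext h.symm)
    rw [hA1 v v'.1 hne', ordOfValue_one]
    simp
  have hAd0 : ∀ v : {v // v ∈ T}, logMap K T (A v) (Sum.inr v) ≠ 0 := by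
    intro v
    show (ordOfValue (v.1.valuation K ((A v : Kˣ) : K)) : ℝ) * _ ≠ 0
    apply mul_ne_zero
    · have hzero : v.1.valuation K ((A v : Kˣ) : K) ≠ 0 := val_ne_zero _ _
      have hord : ordOfValue (v.1.valuation K ((A v : Kˣ) : K)) ≠ 0 := by
        intro h
        exact hA2 v (eq_one_of_ordOfValue_eq_zero hzero h)
      exact_mod_cast Int.cast_ne_zero.mpr hord
    · exact ne_of_gt (log_absNorm_pos v.1)
  set k : {v // v ∈ T} → ℝ := fun v => f (Sum.inr v) / logMap K T (A v) (Sum.inr v) with hk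
  set g : placesOf K T → ℝ := f - ∑ v : {v // v ∈ T}, k v • logMap K T (A v) with hg
  have hlogA_mem : ∀ v : {v // v ∈ T}, logMap K T (A v) ∈ V :=
    fun v => Submodule.subset_span ⟨A v, hAmem v, rfl⟩
  have hgker : g ∈ LinearMap.ker (degreeMap K ℝ T) := by
    rw [hg]
    apply Submodule.sub_mem _ hf
    apply Submodule.sum_mem
    intro v _
    exact Submodule.smul_mem _ _ (hmemker (A v) (hAmem v))
  have hginr : ∀ v : {v // v ∈ T}, g (Sum.inr v) = 0 := by
    intro v
    rw [hg]
    have e : ∀ x : placesOf K T, (f - ∑ b : {v // v ∈ T}, k b • logMap K T (A b)) x =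
        f x - ∑ b : {v // v ∈ T}, k b * logMap K T (A b) x := by
      intro x
      simp only [Pi.sub_apply, Finset.sum_apply, Pi.smul_apply, smul_eq_mul]
    refine (e (Sum.inr v)).trans ?_
    rw [Finset.sum_eq_single v]
    · rw [hk]
      show f (Sum.inr v) - f (Sum.inr v) / logMap K T (A v) (Sum.inr v) *
        logMap K T (A v) (Sum.inr v) = 0
      rw [div_mul_cancel₀ _ (hAd0 v), sub_self]
    · intro b _ hbv
      rw [hAdiag b v hbv, mul_zero]
    · intro hv
      exact absurd (Finset.mem_univ v) hv
  -- the projection onto the infinite coordinates away from `w₀`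
  set Φ : (placesOf K T → ℝ) →ₗ[ℝ] ({w : InfinitePlace K // w ≠ w₀} → ℝ) :=
    LinearMap.pi (fun w => LinearMap.proj (Sum.inl w.1)) with hΦ
  have hΦapp : ∀ (h : placesOf K T → ℝ) (w : {w : InfinitePlace K // w ≠ w₀}),
      Φ h w = h (Sum.inl w.1) := fun h w => rfl
  have hΦlog : ∀ gu : (𝓞 K)ˣ,
      Φ (logMap K T (umap gu)) = logEmbedding K (Additive.ofMul gu) := by
    intro gu
    funext w
    rw [hΦapp, logEmbedding_component]
    show (w.1.mult : ℝ) * Real.log (w.1 ((umap gu : Kˣ) : K)) = _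
    rw [umap_coe]
  -- the subspace of vectors supported at infinity with zero coordinate sum
  set W : Submodule ℝ (placesOf K T → ℝ) :=
    LinearMap.ker (degreeMap K ℝ T) ⊓
      (⨅ v : {v // v ∈ T}, LinearMap.ker
        (LinearMap.proj (R := ℝ) (φ := fun _ : placesOf K T => ℝ) (Sum.inr v))) with hW
  have hWmem : ∀ h : placesOf K T → ℝ,
      h ∈ W ↔ (degreeMap K ℝ T h = 0 ∧ ∀ v : {v // v ∈ T}, h (Sum.inr v) = 0) := by
    intro h
    rw [hW, Submodule.mem_inf, LinearMap.mem_ker]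
    apply and_congr Iff.rfl
    rw [Submodule.mem_iInf]
    apply forall_congr'
    intro v
    rw [LinearMap.mem_ker]
    rfl
  have hgW : g ∈ W := (hWmem g).mpr ⟨hgker, hginr⟩
  have hunitW : ∀ gu : (𝓞 K)ˣ, logMap K T (umap gu) ∈ W := by
    intro gu
    refine (hWmem _).mpr ⟨?_, fun v => logMap_umap_inr T gu v⟩
    rw [degreeMap_apply]
    exact sum_logMap_zero T (umap gu) (umap_mem_sUnits T gu)
  have hΦinjW : ∀ h ∈ W, Φ h = 0 → h = 0 := by
    intro h hh hΦ0
    obtain ⟨hhdeg, hhinr⟩ := (hWmem h).mp hh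
    have hinl : ∀ w : InfinitePlace K, w ≠ w₀ → h (Sum.inl w) = 0 := by
      intro w hw
      have := congrFun hΦ0 ⟨w, hw⟩
      rwa [hΦapp] at this
    have hw₀ : h (Sum.inl (w₀ : InfinitePlace K)) = 0 := by
      rw [degreeMap_apply] at hhdeg
      rw [← hhdeg]
      symm
      apply Finset.sum_eq_single_of_mem (Sum.inl (w₀ : InfinitePlace K)) (Finset.mem_univ _)
      intro b _ hb
      cases b with
      | inl w =>
          apply hinl w
          intro hww
          exact hb (by rw [hww])
      | inr v => exact hhinr v
    funext x
    cases x with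
    | inl w =>
        by_cases hw : w = w₀
        · rw [hw]; exact hw₀
        · exact hinl w hw
    | inr v => exact hhinr v
  -- the span of the image of the units is everything
  have htop : Φ g ∈ Submodule.map Φ (V ⊓ W) := by
    have h1 : Φ g ∈ Submodule.span ℝ (unitLattice K : Set ({w : InfinitePlace K // w ≠ w₀} → ℝ)) := by
      rw [unitLattice_span_eq_top]
      trivial
    refine Submodule.span_le.mpr ?_ h1
    intro z hz
    have hz' : z ∈ unitLattice K := hz
    obtain ⟨x, -, rfl⟩ := Submodule.mem_map.mp hz'
    refine ⟨logMap K T (umap x.toMul), ⟨?_, hunitW x.toMul⟩, hΦlog x.toMul⟩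
    exact Submodule.subset_span ⟨umap x.toMul, umap_mem_sUnits T _, rfl⟩
  obtain ⟨p, hpVW, hΦp⟩ := htop
  have hpV : p ∈ V := hpVW.1
  have hpW : p ∈ W := hpVW.2
  have hgp : g - p ∈ W := Submodule.sub_mem _ hgW hpW
  have hgeqp : g = p := by
    have h0 := hΦinjW _ hgp (by rw [map_sub, hΦp, sub_self])
    exact sub_eq_zero.mp h0
  have hgV : g ∈ V := hgeqp ▸ hpV
  have hfeq : f = g + ∑ v : {v // v ∈ T}, k v • logMap K T (A v) := by
    rw [hg, sub_add_cancel]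
  rw [hfeq]
  apply Submodule.add_mem _ hgV
  apply Submodule.sum_mem
  intro v _
  exact Submodule.smul_mem _ _ (hlogA_mem v)

end StmtAux

/-- **`S`-unit theorem in regulator form.** Let `K` be a number field and
`S` a finite set of places containing the infinite ones (the infinite places together
with a finite set `T` of primes).  Let `X = ker(deg : ℤ[S] → ℤ)`.  Then
`rank_ℤ X = |S| − 1`, and the Dirichlet regulator map
`λ : O_{K,S}^× ⊗ ℝ → X ⊗ ℝ`, `u ↦ Σ_w log‖u‖_w · w`, is an isomorphism of real vector
spaces: the image of the `S`-units lands in the trace-zero hyperplane (product formula),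
spans it over `ℝ`, and the kernel of `λ` consists exactly of the roots of unity. -/
theorem stmt10 (T : Finset (HeightOneSpectrum (𝓞 K))) :
    Module.finrank ℤ (LinearMap.ker (degreeMap K ℤ T)) = Fintype.card (placesOf K T) - 1 ∧
    (∀ u ∈ sUnits K T, ∑ x : placesOf K T, logMap K T u x = 0) ∧
    Submodule.span ℝ (logMap K T '' sUnits K T) = LinearMap.ker (degreeMap K ℝ T) ∧
    (∀ u ∈ sUnits K T, ((∀ x, logMap K T u x = 0) ↔ ∃ m : ℕ, m ≠ 0 ∧ u ^ m = 1)) := by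
  exact ⟨StmtAux.part1 T, fun u hu => StmtAux.sum_logMap_zero T u hu, StmtAux.part3 T,
    fun u hu => StmtAux.part4 T u hu⟩

end
end
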